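/- Let A be a self-adjoint operator with m·I ≤ A ≤ M·I for 0 < m ≤ M, and let x, y be vectors with ⟨x, y⟩ = 0. Then |⟨x, A y⟩|² ≤ ((M−m)/(M+m))² · ⟨x, A x⟩ · ⟨y, A y⟩. -/

import Mathlib

open ContinuousLinearMap in
private lemma wielandt_cs_aux {H : Type*} [NormedAddCommGroup H] [InnerProductSpace ℂ H]
    [CompleteSpace H] (B : H →L[ℂ] H) (hB : B.IsPositive) (u v : H) :
    ((inner ℂ (B u) v : ℂ).re)^2 ≤ (inner ℂ (B u) u : ℂ).re * (inner ℂ (B v) v : ℂ).re := by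
  have hadj : ∀ a b : H, (inner ℂ (B a) b : ℂ) = inner ℂ a (B b) := by
    intro a b
    conv_lhs => rw [← hB.isSelfAdjoint.adjoint_eq]
    exact adjoint_inner_left B b a
  have key : ∀ t : ℝ, 0 ≤ (inner ℂ (B v) v : ℂ).re * (t*t)
      + (2*(inner ℂ (B u) v : ℂ).re) * t + (inner ℂ (B u) u : ℂ).re := by
    intro t
    have h0 : (0:ℝ) ≤ (inner ℂ (B (u + (t:ℂ) • v)) (u + (t:ℂ) • v) : ℂ).re := hB.2 _
    have expand : (inner ℂ (B (u + (t:ℂ) • v)) (u + (t:ℂ) • v) : ℂ)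
        = inner ℂ (B u) u + (t:ℂ) * inner ℂ (B u) v + (t:ℂ) * inner ℂ (B v) u
          + (t:ℂ)*((t:ℂ) * inner ℂ (B v) v) := by
      rw [map_add, map_smul, inner_add_left, inner_add_right, inner_add_right,
        inner_smul_left, inner_smul_left, inner_smul_right, inner_smul_right,
        Complex.conj_ofReal]
      ring
    have hre : (inner ℂ (B v) u : ℂ).re = (inner ℂ (B u) v : ℂ).re := by
      rw [hadj v u, ← inner_conj_symm (B u) v, Complex.conj_re]
    rw [expand] at h0
    simp only [Complex.add_re, Complex.re_ofReal_mul, hre] at h0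
    nlinarith [h0]
  have hd := discrim_le_zero key
  rw [discrim] at hd
  nlinarith [hd]

private lemma wielandt_core_aux (m M a b α β γ : ℝ) (hm : 0 < m) (hmM : m ≤ M)
    (hp : 0 ≤ α - m*a) (hq : 0 ≤ M*a - α) (hr : 0 ≤ β - m*b) (hs : 0 ≤ M*b - β)
    (h1 : γ^2 ≤ (α - m*a)*(β - m*b)) (h2 : γ^2 ≤ (M*a - α)*(M*b - β)) :
    (M+m)^2 * γ^2 ≤ (M-m)^2 * (α*β) := by
  set p := α - m*a with hpd
  set q := M*a - α with hqd
  set r := β - m*b with hrd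
  set s := M*b - β with hsd
  have hprod : γ^2 * γ^2 ≤ (p*s)*(q*r) := by
    calc γ^2 * γ^2 ≤ (p*r)*(q*s) := by
          apply mul_le_mul h1 h2 (sq_nonneg γ) (mul_nonneg hp hr)
      _ = (p*s)*(q*r) := by ring
  have hps : 0 ≤ p*s := mul_nonneg hp hs
  have hqr : 0 ≤ q*r := mul_nonneg hq hr
  have key : 2*γ^2 ≤ p*s + q*r := by
    nlinarith [sq_nonneg (p*s - q*r), sq_nonneg (p*s + q*r), sq_nonneg γ,
      sq_nonneg (p*s + q*r - 2*γ^2)]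
  have hα : (M-m)*α = M*p + m*q := by rw [hpd, hqd]; ring
  have hβ : (M-m)*β = M*r + m*s := by rw [hrd, hsd]; ring
  have hMm : (M-m)^2*(α*β) = (M*p+m*q)*(M*r+m*s) := by
    calc (M-m)^2*(α*β) = ((M-m)*α)*((M-m)*β) := by ring
      _ = (M*p+m*q)*(M*r+m*s) := by rw [hα, hβ]
  rw [hMm]
  have e : (M*p+m*q)*(M*r+m*s) = M^2*(p*r) + m^2*(q*s) + M*m*(p*s+q*r) := by ring
  rw [e]
  have h0m : (0:ℝ) ≤ m := le_of_lt hm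
  have h0M : (0:ℝ) ≤ M := le_trans h0m hmM
  nlinarith [mul_le_mul_of_nonneg_left h1 (sq_nonneg M), mul_le_mul_of_nonneg_left h2 (sq_nonneg m),
    mul_le_mul_of_nonneg_left key (mul_nonneg h0M h0m)]

theorem wielandt_inequality
    {H : Type*} [NormedAddCommGroup H] [InnerProductSpace ℂ H] [CompleteSpace H]
    (A : H →L[ℂ] H) (m M : ℝ) (hm : 0 < m) (hmM : m ≤ M)
    (h1 : (A - m • (1 : H →L[ℂ] H)).IsPositive)
    (h2 : ((M • (1 : H →L[ℂ] H)) - A).IsPositive)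
    (x y : H) (hxy : (inner ℂ x y : ℂ) = 0) :
    ‖(inner ℂ x (A y) : ℂ)‖ ^ 2 ≤
      ((M - m) / (M + m)) ^ 2 * ((inner ℂ x (A x) : ℂ).re * (inner ℂ y (A y) : ℂ).re) := by
  have hMm : (0:ℝ) < M + m := by linarith
  -- A is self-adjoint
  have hsA : IsSelfAdjoint A := by
    have hsm : IsSelfAdjoint (m • (1 : H →L[ℂ] H)) :=
      IsSelfAdjoint.smul (isSelfAdjoint_iff.mpr (star_trivial m)) (IsSelfAdjoint.one _)
    have h := h1.isSelfAdjoint.add hsm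
    simpa using h
  have hadjA : ∀ a b : H, (inner ℂ (A a) b : ℂ) = inner ℂ a (A b) := by
    intro a b
    conv_lhs => rw [← hsA.adjoint_eq]
    exact ContinuousLinearMap.adjoint_inner_left A b a
  -- rewrite smul of operators
  have hsm1 : (m • (1 : H →L[ℂ] H)) = ((m:ℂ) • (1 : H →L[ℂ] H)) := by
    rw [← algebraMap_smul ℂ m (1 : H →L[ℂ] H)]
    norm_num [Complex.coe_algebraMap]
  have hsM1 : (M • (1 : H →L[ℂ] H)) = ((M:ℂ) • (1 : H →L[ℂ] H)) := by
    rw [← algebraMap_smul ℂ M (1 : H →L[ℂ] H)]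
    norm_num [Complex.coe_algebraMap]
  -- expansions of the two positive forms
  have e1 : ∀ u v : H, (inner ℂ ((A - m • (1 : H →L[ℂ] H)) u) v : ℂ)
      = inner ℂ (A u) v - (m:ℂ) * inner ℂ u v := by
    intro u v
    rw [hsm1, ContinuousLinearMap.sub_apply, ContinuousLinearMap.smul_apply,
      ContinuousLinearMap.one_apply, inner_sub_left, inner_smul_left, Complex.conj_ofReal]
  have e2 : ∀ u v : H, (inner ℂ (((M • (1 : H →L[ℂ] H)) - A) u) v : ℂ)
      = (M:ℂ) * inner ℂ u v - inner ℂ (A u) v := by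
    intro u v
    rw [hsM1, ContinuousLinearMap.sub_apply, ContinuousLinearMap.smul_apply,
      ContinuousLinearMap.one_apply, inner_sub_left, inner_smul_left, Complex.conj_ofReal]
  -- basic nonnegativity
  have hαnn : (0:ℝ) ≤ (inner ℂ x (A x) : ℂ).re := by
    have h0 : (0:ℝ) ≤ (inner ℂ ((A - m • (1 : H →L[ℂ] H)) x) x : ℂ).re := h1.2 x
    rw [e1 x x] at h0
    have hxx : (inner ℂ x x : ℂ) = (‖x‖:ℂ)^2 := inner_self_eq_norm_sq_to_K x
    rw [← hadjA x x]
    have : ((m:ℂ) * inner ℂ x x).re = m * ‖x‖^2 := by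
      rw [hxx]; simp [Complex.re_ofReal_mul]; ring_nf; simp [← Complex.ofReal_pow]
    simp only [Complex.sub_re, this] at h0
    nlinarith [sq_nonneg ‖x‖, hm]
  have hβnn : (0:ℝ) ≤ (inner ℂ y (A y) : ℂ).re := by
    have h0 : (0:ℝ) ≤ (inner ℂ ((A - m • (1 : H →L[ℂ] H)) y) y : ℂ).re := h1.2 y
    rw [e1 y y] at h0
    have hyy : (inner ℂ y y : ℂ) = (‖y‖:ℂ)^2 := inner_self_eq_norm_sq_to_K y
    rw [← hadjA y y]
    have : ((m:ℂ) * inner ℂ y y).re = m * ‖y‖^2 := by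
      rw [hyy]; simp [Complex.re_ofReal_mul]; ring_nf; simp [← Complex.ofReal_pow]
    simp only [Complex.sub_re, this] at h0
    nlinarith [sq_nonneg ‖y‖, hm]
  by_cases hg : (inner ℂ x (A y) : ℂ) = 0
  · rw [hg]
    simp only [norm_zero]
    have : (0:ℝ) ≤ ((M - m) / (M + m)) ^ 2 * ((inner ℂ x (A x) : ℂ).re * (inner ℂ y (A y) : ℂ).re) :=
      mul_nonneg (sq_nonneg _) (mul_nonneg hαnn hβnn)
    simpa using this
  · set g : ℂ := inner ℂ x (A y) with hgdef
    set c : ℂ := (‖g‖ : ℂ) / g with hcdef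
    have hc : ‖c‖ = 1 := by
      rw [hcdef, norm_div]
      simp only [Complex.norm_real, Real.norm_eq_abs, abs_norm]
      exact div_self (norm_ne_zero_iff.mpr hg)
    set y' : H := c • y with hy'def
    have hxy' : (inner ℂ x y' : ℂ) = 0 := by
      rw [hy'def, inner_smul_right, hxy, mul_zero]
    have hxAy' : (inner ℂ x (A y') : ℂ) = (‖g‖ : ℂ) := by
      rw [hy'def, map_smul, inner_smul_right, ← hgdef, hcdef]
      field_simp
    have hny' : ‖y'‖ = ‖y‖ := by
      rw [hy'def, norm_smul, hc, one_mul]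
    have hAy'y' : (inner ℂ (A y') y' : ℂ).re = (inner ℂ (A y) y : ℂ).re := by
      rw [hy'def, map_smul, inner_smul_left, inner_smul_right]
      have : (starRingEnd ℂ) c * (c * inner ℂ (A y) y) = ((‖c‖^2 : ℝ) : ℂ) * inner ℂ (A y) y := by
        rw [← mul_assoc, ← Complex.normSq_eq_conj_mul_self, Complex.normSq_eq_norm_sq]
      rw [this, hc]
      simp
  -- Now set up the scalars
    set a : ℝ := ‖x‖^2 with hadef
    set b : ℝ := ‖y‖^2 with hbdef
    set α : ℝ := (inner ℂ x (A x) : ℂ).re with hαdef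
    set β : ℝ := (inner ℂ y (A y) : ℂ).re with hβdef
    set γ : ℝ := ‖g‖ with hγdef
    have hxx : (inner ℂ x x : ℂ) = ((a:ℝ) : ℂ) := by
      rw [hadef]; push_cast; exact inner_self_eq_norm_sq_to_K x
    have hy'y' : (inner ℂ y' y' : ℂ) = ((b:ℝ) : ℂ) := by
      rw [hbdef, ← hny']; push_cast; exact inner_self_eq_norm_sq_to_K y'
    -- values of the form B1
    have f1uu : (inner ℂ ((A - m • (1 : H →L[ℂ] H)) x) x : ℂ).re = α - m * a := by
      rw [e1 x x, hxx]
      simp only [Complex.sub_re, Complex.re_ofReal_mul, Complex.ofReal_re]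
      rw [hαdef, ← hadjA x x]
    have f1vv : (inner ℂ ((A - m • (1 : H →L[ℂ] H)) y') y' : ℂ).re = β - m * b := by
      rw [e1 y' y', hy'y']
      simp only [Complex.sub_re, Complex.re_ofReal_mul, Complex.ofReal_re]
      rw [hβdef, ← hadjA y y, hAy'y']
    have f1uv : (inner ℂ ((A - m • (1 : H →L[ℂ] H)) x) y' : ℂ).re = γ := by
      rw [e1 x y', hxy', hadjA x y', hxAy']
      simp [hγdef]
    -- values of the form B2
    have f2uu : (inner ℂ (((M • (1 : H →L[ℂ] H)) - A) x) x : ℂ).re = M * a - α := by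
      rw [e2 x x, hxx]
      simp only [Complex.sub_re, Complex.re_ofReal_mul, Complex.ofReal_re]
      rw [hαdef, ← hadjA x x]
    have f2vv : (inner ℂ (((M • (1 : H →L[ℂ] H)) - A) y') y' : ℂ).re = M * b - β := by
      rw [e2 y' y', hy'y']
      simp only [Complex.sub_re, Complex.re_ofReal_mul, Complex.ofReal_re]
      rw [hβdef, ← hadjA y y, hAy'y']
    have f2uv : (inner ℂ (((M • (1 : H →L[ℂ] H)) - A) x) y' : ℂ).re = -γ := by
      rw [e2 x y', hxy', hadjA x y', hxAy']
      simp [hγdef]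
    -- Cauchy-Schwarz for both forms
    have cs1 := wielandt_cs_aux _ h1 x y'
    rw [f1uu, f1vv, f1uv] at cs1
    have cs2 := wielandt_cs_aux _ h2 x y'
    rw [f2uu, f2vv, f2uv] at cs2
    have cs2' : γ^2 ≤ (M*a - α)*(M*b - β) := by nlinarith [cs2]
    -- nonnegativity of the factors
    have hp : 0 ≤ α - m*a := by
      have h0 : (0:ℝ) ≤ (inner ℂ ((A - m • (1 : H →L[ℂ] H)) x) x : ℂ).re := h1.2 x
      rw [f1uu] at h0; linarith
    have hr : 0 ≤ β - m*b := by
      have h0 : (0:ℝ) ≤ (inner ℂ ((A - m • (1 : H →L[ℂ] H)) y') y' : ℂ).re := h1.2 y'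
      rw [f1vv] at h0; linarith
    have hq : 0 ≤ M*a - α := by
      have h0 : (0:ℝ) ≤ (inner ℂ (((M • (1 : H →L[ℂ] H)) - A) x) x : ℂ).re := h2.2 x
      rw [f2uu] at h0; linarith
    have hs : 0 ≤ M*b - β := by
      have h0 : (0:ℝ) ≤ (inner ℂ (((M • (1 : H →L[ℂ] H)) - A) y') y' : ℂ).re := h2.2 y'
      rw [f2vv] at h0; linarith
    have core := wielandt_core_aux m M a b α β γ hm hmM hp hq hr hs cs1 cs2'
    -- conclude
    clear_value a b α β γ
    show γ^2 ≤ ((M - m) / (M + m))^2 * (α * β)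
    rw [div_pow, div_mul_eq_mul_div, le_div_iff₀ (by positivity : (0:ℝ) < (M+m)^2)]
    linarith [core]
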